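/- arXiv:math/0311012 — 2 statements merged into one kernel-verified Lean document; each statement's English description precedes it below -/
import Mathlib

section
/- Let V be a finite-dimensional complex vector space and W ≤ GL(V) a finite group. Then the Hilbert series of the invariant ring satisfies Molien's formula: ∑_{d≥0} dim (K[V]^W)_d · x^d = (1/|W|) ∑_{g∈W} 1/det_V(1 − g·x). -/
open MvPolynomial

variable {n : ℕ}

/-- The matrix of a linear automorphism of `Fin n → ℂ` in the standard basis. -/
noncomputable def glMatrix (g : (Fin n → ℂ) ≃ₗ[ℂ] (Fin n → ℂ)) :
    Matrix (Fin n) (Fin n) ℂ :=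
  LinearMap.toMatrix (Pi.basisFun ℂ (Fin n)) (Pi.basisFun ℂ (Fin n)) g.toLinearMap

/-- The induced action of a linear automorphism on the algebra
`ℂ[V] = ℂ[X_1, ..., X_n]` of polynomial functions on `V`. -/
noncomputable def polyAct (g : (Fin n → ℂ) ≃ₗ[ℂ] (Fin n → ℂ)) :
    MvPolynomial (Fin n) ℂ →ₐ[ℂ] MvPolynomial (Fin n) ℂ :=
  MvPolynomial.aeval fun i => ∑ j, MvPolynomial.C (glMatrix g i j) * MvPolynomial.X j

/-- The submodule of `W`-invariant polynomials. -/
noncomputable def invariantsSubmodule (W : Subgroup ((Fin n → ℂ) ≃ₗ[ℂ] (Fin n → ℂ))) :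
    Submodule ℂ (MvPolynomial (Fin n) ℂ) :=
  ⨅ g ∈ W, LinearMap.eqLocus (polyAct g).toLinearMap LinearMap.id

/-- The reverse characteristic polynomial `det_V(1 - g·x)` of `g` acting on `V`,
as a formal power series in `x`. -/
noncomputable def detOneSub (g : (Fin n → ℂ) ≃ₗ[ℂ] (Fin n → ℂ)) : PowerSeries ℂ :=
  Matrix.det (1 - (PowerSeries.X : PowerSeries ℂ) •
    (glMatrix g).map (PowerSeries.C (R := ℂ)))

namespace MolienAux

open Finset

noncomputable def actMat (A : Matrix (Fin n) (Fin n) ℂ) :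
    MvPolynomial (Fin n) ℂ →ₐ[ℂ] MvPolynomial (Fin n) ℂ :=
  aeval fun i => ∑ j, C (A i j) * X j

lemma polyAct_eq (g : (Fin n → ℂ) ≃ₗ[ℂ] (Fin n → ℂ)) : polyAct g = actMat (glMatrix g) := rfl

lemma actMat_X (A : Matrix (Fin n) (Fin n) ℂ) (i : Fin n) :
    actMat A (X i) = ∑ j, C (A i j) * X j :=
  aeval_X _ i

lemma actMat_mul (A B : Matrix (Fin n) (Fin n) ℂ) :
    actMat (A * B) = (actMat B).comp (actMat A) := by
  apply algHom_ext
  intro i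
  rw [AlgHom.comp_apply, actMat_X, actMat_X, map_sum]
  simp only [map_mul, actMat_X, ← C_eq_coe_nat]
  simp only [actMat, aeval_C, algebraMap_eq, Matrix.mul_apply, map_sum, C_mul, Finset.sum_mul,
    Finset.mul_sum, mul_assoc]
  exact Finset.sum_comm

lemma actMat_one : actMat (1 : Matrix (Fin n) (Fin n) ℂ) = AlgHom.id ℂ _ := by
  apply algHom_ext
  intro i
  rw [actMat_X]
  simp [Matrix.one_apply, apply_ite C, ite_mul, Finset.sum_ite_eq]

lemma linform_hom (A : Matrix (Fin n) (Fin n) ℂ) (i : Fin n) :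
    (∑ j, C (A i j) * X j).IsHomogeneous 1 :=
  IsHomogeneous.sum _ _ _ (fun j _ => (isHomogeneous_X _ j).C_mul _)

lemma actMat_maps (A : Matrix (Fin n) (Fin n) ℂ) {d : ℕ} {p : MvPolynomial (Fin n) ℂ}
    (hp : p ∈ homogeneousSubmodule (Fin n) ℂ d) :
    actMat A p ∈ homogeneousSubmodule (Fin n) ℂ d := by
  rw [mem_homogeneousSubmodule] at hp ⊢
  have := hp.aeval _ (linform_hom A)
  rw [one_mul] at this
  exact this

noncomputable def actEnd (A : Matrix (Fin n) (Fin n) ℂ) (d : ℕ) :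
    Module.End ℂ (homogeneousSubmodule (Fin n) ℂ d) :=
  LinearMap.restrict (actMat A).toLinearMap (fun _ hp => actMat_maps A hp)

lemma actEnd_mul (A B : Matrix (Fin n) (Fin n) ℂ) (d : ℕ) :
    actEnd (A * B) d = actEnd B d * actEnd A d := by
  apply LinearMap.ext; intro p
  exact Subtype.ext (DFunLike.congr_fun (actMat_mul A B) p.1)

lemma actEnd_one (d : ℕ) : actEnd (1 : Matrix (Fin n) (Fin n) ℂ) d = 1 := by
  apply LinearMap.ext; intro p
  exact Subtype.ext (DFunLike.congr_fun (actMat_one (n := n)) p.1)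

noncomputable def degFinset (n d : ℕ) : Finset (Fin n →₀ ℕ) :=
  Finset.finsuppAntidiag Finset.univ d

lemma homogeneousSubmodule_eq (d : ℕ) :
    homogeneousSubmodule (Fin n) ℂ d = restrictSupport ℂ ↑(degFinset n d) := by
  rw [homogeneousSubmodule_eq_finsupp_supported]
  show _ = AddMonoidAlgebra.supported ℂ ℂ _
  congr 1
  ext σ
  simp only [Set.mem_setOf_eq, Finset.coe_sort_coe, Finset.mem_coe, degFinset,
    Finset.mem_finsuppAntidiag]
  constructor
  · intro h
    refine ⟨?_, Finset.subset_univ _⟩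
    rw [← h, Finsupp.degree]
    exact (Finset.sum_subset (Finset.subset_univ _)
      (fun i _ hi => Finsupp.notMem_support_iff.mp hi)).symm
  · rintro ⟨h, -⟩
    rw [← h, Finsupp.degree]
    exact Finset.sum_subset (Finset.subset_univ _)
      (fun i _ hi => Finsupp.notMem_support_iff.mp hi)

noncomputable def degBasis (d : ℕ) :
    Module.Basis ↑(degFinset n d) ℂ (homogeneousSubmodule (Fin n) ℂ d) :=
  (basisRestrictSupport ℂ _).map (LinearEquiv.ofEq _ _ (homogeneousSubmodule_eq d).symm)

instance (d : ℕ) : Module.Finite ℂ (homogeneousSubmodule (Fin n) ℂ d) :=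
  Module.Finite.of_basis (degBasis d)

lemma degBasis_repr (d : ℕ) (p : homogeneousSubmodule (Fin n) ℂ d) (σ : ↑(degFinset n d)) :
    (degBasis d).repr p σ = coeff σ.1 (p : MvPolynomial (Fin n) ℂ) := rfl

lemma degBasis_apply (d : ℕ) (σ : ↑(degFinset n d)) :
    ((degBasis d) σ : MvPolynomial (Fin n) ℂ) = monomial σ.1 1 := by
  apply MvPolynomial.ext
  intro τ
  by_cases hτ : τ ∈ degFinset n d
  · have h := degBasis_repr d ((degBasis d) σ) ⟨τ, hτ⟩
    rw [Module.Basis.repr_self] at h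
    rw [← h, coeff_monomial, Finsupp.single_apply]
    by_cases hστ : σ.1 = τ
    · rw [if_pos hστ, if_pos (Subtype.ext hστ)]
    · rw [if_neg hστ, if_neg (fun hc => hστ (congrArg Subtype.val hc))]
  · have hb : (((degBasis d) σ : MvPolynomial (Fin n) ℂ)).IsHomogeneous d :=
      (mem_homogeneousSubmodule _ _).1 ((degBasis d) σ).2
    have hτd : τ.degree ≠ d := by
      intro hc
      apply hτ
      rw [degFinset, Finset.mem_finsuppAntidiag]
      refine ⟨?_, Finset.subset_univ _⟩
      rw [← hc, Finsupp.degree]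
      exact (Finset.sum_subset (Finset.subset_univ _)
        (fun i _ hi => Finsupp.notMem_support_iff.mp hi)).symm
    rw [hb.coeff_eq_zero hτd, coeff_monomial, if_neg]
    intro hc
    apply hτ
    rw [← hc]
    exact σ.2

lemma diag_row (lam : Fin n → ℂ) (i : Fin n) :
    ∑ j, C (Matrix.diagonal lam i j) * X j = (C (lam i) * X i : MvPolynomial (Fin n) ℂ) := by
  rw [Finset.sum_eq_single i]
  · rw [Matrix.diagonal_apply_eq]
  · intro j _ hj
    rw [Matrix.diagonal_apply_ne' _ hj, map_zero, zero_mul]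
  · intro h; exact absurd (Finset.mem_univ i) h

lemma actMat_diagonal (lam : Fin n → ℂ) (σ : Fin n →₀ ℕ) :
    actMat (Matrix.diagonal lam) (monomial σ (1 : ℂ)) = (∏ i, lam i ^ σ i) • monomial σ 1 := by
  rw [actMat, aeval_monomial, map_one, one_mul]
  simp only [diag_row]
  rw [Finsupp.prod_fintype _ _ (fun i => pow_zero _)]
  rw [smul_eq_C_mul, monomial_eq, map_one, one_mul]
  rw [Finsupp.prod_fintype _ _ (fun i => pow_zero _)]
  rw [map_prod, ← Finset.prod_mul_distrib]
  apply Finset.prod_congr rfl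
  intro i _
  rw [mul_pow, C_pow]

lemma trace_actEnd_diagonal (lam : Fin n → ℂ) (d : ℕ) :
    LinearMap.trace ℂ _ (actEnd (Matrix.diagonal lam) d)
      = ∑ σ ∈ degFinset n d, ∏ i, lam i ^ σ i := by
  classical
  rw [LinearMap.trace_eq_matrix_trace ℂ (degBasis d), Matrix.trace]
  rw [← Finset.sum_coe_sort (degFinset n d) (fun σ => ∏ i, lam i ^ σ i)]
  apply Finset.sum_congr rfl
  intro σ _
  rw [Matrix.diag]
  rw [LinearMap.toMatrix_apply, degBasis_repr]
  show coeff σ.1 (actMat (Matrix.diagonal lam) ((degBasis d) σ : MvPolynomial (Fin n) ℂ)) = _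
  rw [degBasis_apply, actMat_diagonal, coeff_smul, coeff_monomial, if_pos rfl, smul_eq_mul,
    mul_one]

set_option synthInstance.maxHeartbeats 1000000 in
lemma trace_actEnd_conj (A P Q : Matrix (Fin n) (Fin n) ℂ) (h2 : Q * P = 1) (d : ℕ) :
    LinearMap.trace ℂ _ (actEnd (P * A * Q) d) = LinearMap.trace ℂ _ (actEnd A d) := by
  have e1 : actEnd (P * A * Q) d = (actEnd Q d * actEnd A d) * actEnd P d := by
    rw [actEnd_mul, actEnd_mul, mul_assoc]
  rw [e1, LinearMap.trace_mul_comm, ← mul_assoc, ← actEnd_mul, h2, actEnd_one, one_mul]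

lemma exists_eigenbasis (g : (Fin n → ℂ) ≃ₗ[ℂ] (Fin n → ℂ)) (N : ℕ) (hN : 0 < N)
    (hg : g ^ N = 1) :
    ∃ (b : Module.Basis (Fin n) ℂ (Fin n → ℂ)) (lam : Fin n → ℂ),
      ∀ i, g (b i) = lam i • b i := by
  classical
  set f : Module.End ℂ (Fin n → ℂ) := g.toLinearMap with hf
  have hfN : f ^ N = 1 := by
    apply LinearMap.ext
    intro x
    have := congrArg (fun (e : (Fin n → ℂ) ≃ₗ[ℂ] (Fin n → ℂ)) => e x) hg
    simpa [LinearEquiv.pow_apply, Module.End.pow_apply, hf] using this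
  have hss : f.IsSemisimple := by
    apply Module.End.isSemisimple_of_squarefree_aeval_eq_zero
      (p := Polynomial.X ^ N - 1)
    · exact (Polynomial.X_pow_sub_one_separable_iff.mpr
        (by exact_mod_cast (Nat.cast_ne_zero (R := ℂ)).mpr hN.ne')).squarefree
    · rw [map_sub, map_pow, Polynomial.aeval_X, map_one, hfN, sub_self]
  have htop : ⨆ μ : ℂ, f.eigenspace μ = ⊤ := by
    have h1 := Module.End.iSup_maxGenEigenspace_eq_top f
    simp_rw [hss.isFinitelySemisimple.maxGenEigenspace_eq_eigenspace] at h1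
    exact h1
  have hint : DirectSum.IsInternal (fun μ : ℂ => f.eigenspace μ) :=
    (DirectSum.isInternal_submodule_iff_iSupIndep_and_iSup_eq_top _).mpr
      ⟨f.eigenspaces_iSupIndep, htop⟩
  let v : ∀ μ : ℂ, Module.Basis (Module.Free.ChooseBasisIndex ℂ (f.eigenspace μ)) ℂ (f.eigenspace μ) :=
    fun μ => Module.Free.chooseBasis ℂ _
  let b0 := hint.collectedBasis v
  haveI : Fintype (Σ μ : ℂ, Module.Free.ChooseBasisIndex ℂ (f.eigenspace μ)) :=
    FiniteDimensional.fintypeBasisIndex b0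
  let e := b0.indexEquiv (Pi.basisFun ℂ (Fin n))
  refine ⟨b0.reindex e, fun i => (e.symm i).1, fun i => ?_⟩
  rw [Module.Basis.reindex_apply]
  have hmem : (b0 (e.symm i)) ∈ f.eigenspace (e.symm i).1 := by
    rw [hint.collectedBasis_coe]
    exact (v (e.symm i).1 (e.symm i).2).2
  exact Module.End.mem_eigenspace_iff.mp hmem

lemma glMatrix_conj (g : (Fin n → ℂ) ≃ₗ[ℂ] (Fin n → ℂ)) (N : ℕ) (hN : 0 < N)
    (hg : g ^ N = 1) :
    ∃ (P Q : Matrix (Fin n) (Fin n) ℂ) (lam : Fin n → ℂ),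
      P * Q = 1 ∧ Q * P = 1 ∧ glMatrix g = P * Matrix.diagonal lam * Q := by
  classical
  obtain ⟨b, lam, hb⟩ := exists_eigenbasis g N hN hg
  set std := Pi.basisFun ℂ (Fin n)
  refine ⟨std.toMatrix b, b.toMatrix std, lam,
    Module.Basis.toMatrix_mul_toMatrix_flip _ _, Module.Basis.toMatrix_mul_toMatrix_flip _ _, ?_⟩
  have hD : LinearMap.toMatrix b b g.toLinearMap = Matrix.diagonal lam := by
    ext i j
    rw [LinearMap.toMatrix_apply]
    show b.repr (g (b j)) i = _
    rw [hb j, map_smul, Module.Basis.repr_self]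
    rw [Finsupp.smul_single, smul_eq_mul, mul_one, Finsupp.single_apply, Matrix.diagonal_apply]
    by_cases hij : i = j
    · rw [if_pos hij.symm, if_pos hij, hij]
    · rw [if_neg (Ne.symm hij), if_neg hij]
  rw [glMatrix, ← hD, basis_toMatrix_mul_linearMap_toMatrix_mul_basis_toMatrix]

lemma detOneSub_conj (g : (Fin n → ℂ) ≃ₗ[ℂ] (Fin n → ℂ))
    (P Q : Matrix (Fin n) (Fin n) ℂ) (lam : Fin n → ℂ)
    (h1 : P * Q = 1) (hA : glMatrix g = P * Matrix.diagonal lam * Q) :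
    detOneSub g = ∏ i, (1 - PowerSeries.C (lam i) * PowerSeries.X) := by
  classical
  set Cr : ℂ →+* PowerSeries ℂ := (PowerSeries.C) with hCr
  set P' := P.map Cr
  set Q' := Q.map Cr
  set D' := (Matrix.diagonal lam).map Cr
  have hPQ : P' * Q' = 1 := by
    rw [← Matrix.map_mul, h1, Matrix.map_one _ (map_zero Cr) (map_one Cr)]
  have key : (1 : Matrix (Fin n) (Fin n) (PowerSeries ℂ)) -
      (PowerSeries.X : PowerSeries ℂ) • (glMatrix g).map Cr
      = P' * ((1 : Matrix (Fin n) (Fin n) (PowerSeries ℂ)) -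
          (PowerSeries.X : PowerSeries ℂ) • D') * Q' := by
    rw [hA, Matrix.map_mul, Matrix.map_mul]
    rw [Matrix.mul_sub, Matrix.sub_mul, mul_one, hPQ]
    rw [Matrix.mul_smul, Matrix.smul_mul]
  rw [detOneSub, key, Matrix.det_mul, Matrix.det_mul, mul_right_comm, ← Matrix.det_mul, hPQ,
    Matrix.det_one, one_mul]
  have hdiag : (1 : Matrix (Fin n) (Fin n) (PowerSeries ℂ)) -
      (PowerSeries.X : PowerSeries ℂ) • D'
      = Matrix.diagonal (fun i => 1 - PowerSeries.C (lam i) * PowerSeries.X) := by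
    ext i j
    rcases eq_or_ne i j with hij | hij
    · subst hij
      simp [Matrix.sub_apply, Matrix.smul_apply, Matrix.one_apply, Matrix.map_apply,
        Matrix.diagonal_apply_eq, smul_eq_mul, mul_comm, D', Cr]
    · simp [Matrix.sub_apply, Matrix.smul_apply, Matrix.one_apply_ne hij, Matrix.map_apply,
        Matrix.diagonal_apply_ne _ hij, D', Cr]
  rw [hdiag, Matrix.det_diagonal]

lemma geom_series (a : ℂ) :
    (1 - PowerSeries.C a * PowerSeries.X) * PowerSeries.mk (fun k => a ^ k) = 1 := by
  ext d
  rw [sub_mul, one_mul, map_sub, mul_assoc]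
  cases d with
  | zero => simp
  | succ d =>
      simp [PowerSeries.coeff_mk, PowerSeries.coeff_C_mul, PowerSeries.coeff_succ_X_mul,
        pow_succ, PowerSeries.coeff_one, mul_comm]

lemma prod_one_sub_inv (lam : Fin n → ℂ) :
    (∏ i, (1 - PowerSeries.C (lam i) * PowerSeries.X))⁻¹
      = PowerSeries.mk (fun d => ∑ σ ∈ degFinset n d, ∏ i, lam i ^ σ i) := by
  classical
  have hconst : PowerSeries.constantCoeff (∏ i, (1 - PowerSeries.C (lam i) * PowerSeries.X))
      ≠ 0 := by
    rw [map_prod]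
    simp
  rw [PowerSeries.inv_eq_iff_mul_eq_one hconst]
  have hmk : PowerSeries.mk (fun d => ∑ σ ∈ degFinset n d, ∏ i, lam i ^ σ i)
      = ∏ i, PowerSeries.mk (fun k => lam i ^ k) := by
    ext d
    rw [PowerSeries.coeff_mk, PowerSeries.coeff_prod]
    apply Finset.sum_congr rfl
    intro σ _
    apply Finset.prod_congr rfl
    intro i _
    rw [PowerSeries.coeff_mk]
  rw [hmk, ← Finset.prod_mul_distrib]
  apply Finset.prod_eq_one
  intro i _
  rw [mul_comm, geom_series]

lemma detOneSub_inv (g : (Fin n → ℂ) ≃ₗ[ℂ] (Fin n → ℂ)) (N : ℕ) (hN : 0 < N)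
    (hg : g ^ N = 1) :
    (detOneSub g)⁻¹
      = PowerSeries.mk (fun d => LinearMap.trace ℂ _ (actEnd (glMatrix g) d)) := by
  obtain ⟨P, Q, lam, h1, h2, hA⟩ := glMatrix_conj g N hN hg
  rw [detOneSub_conj g P Q lam h1 hA, prod_one_sub_inv]
  ext d
  rw [PowerSeries.coeff_mk, PowerSeries.coeff_mk, hA, trace_actEnd_conj _ _ _ h2,
    trace_actEnd_diagonal]

lemma glMatrix_mul (g h : (Fin n → ℂ) ≃ₗ[ℂ] (Fin n → ℂ)) :
    glMatrix (g * h) = glMatrix g * glMatrix h := by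
  have h0 : (g * h).toLinearMap = g.toLinearMap ∘ₗ h.toLinearMap := LinearMap.ext fun _ => rfl
  rw [glMatrix, glMatrix, glMatrix, h0,
    LinearMap.toMatrix_comp (Pi.basisFun ℂ (Fin n)) (Pi.basisFun ℂ (Fin n)) (Pi.basisFun ℂ (Fin n))]

lemma glMatrix_one : glMatrix (1 : (Fin n → ℂ) ≃ₗ[ℂ] (Fin n → ℂ)) = 1 := by
  rw [glMatrix]
  exact LinearMap.toMatrix_id _

variable (W : Subgroup ((Fin n → ℂ) ≃ₗ[ℂ] (Fin n → ℂ)))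

/-- The representation of `W` on the degree-`d` homogeneous component. -/
noncomputable def rep (d : ℕ) : Representation ℂ W (homogeneousSubmodule (Fin n) ℂ d) where
  toFun g := actEnd (glMatrix ((g⁻¹ : W) : (Fin n → ℂ) ≃ₗ[ℂ] (Fin n → ℂ))) d
  map_one' := by
    simp only [inv_one]
    show actEnd (glMatrix (1 : (Fin n → ℂ) ≃ₗ[ℂ] (Fin n → ℂ))) d = 1
    rw [glMatrix_one, actEnd_one]
  map_mul' g h := by
    simp only [mul_inv_rev]
    show actEnd (glMatrix (((h⁻¹ : W) : (Fin n → ℂ) ≃ₗ[ℂ] (Fin n → ℂ))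
        * ((g⁻¹ : W) : (Fin n → ℂ) ≃ₗ[ℂ] (Fin n → ℂ)))) d = _
    rw [glMatrix_mul, actEnd_mul]

lemma rep_apply (d : ℕ) (g : W) (p : homogeneousSubmodule (Fin n) ℂ d) :
    ((rep W d g p : MvPolynomial (Fin n) ℂ))
      = actMat (glMatrix ((g⁻¹ : W) : (Fin n → ℂ) ≃ₗ[ℂ] (Fin n → ℂ))) p := rfl

lemma rep_invariants (d : ℕ) :
    Submodule.map (homogeneousSubmodule (Fin n) ℂ d).subtype (rep W d).invariants
      = homogeneousSubmodule (Fin n) ℂ d ⊓ invariantsSubmodule W := by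
  ext p
  simp only [Submodule.mem_map, Submodule.mem_inf, Representation.mem_invariants,
    Submodule.coe_subtype]
  constructor
  · rintro ⟨⟨q, hq⟩, hinv, rfl⟩
    refine ⟨hq, ?_⟩
    rw [invariantsSubmodule]
    simp only [Submodule.mem_iInf]
    intro g hg
    rw [LinearMap.mem_eqLocus]
    show polyAct g q = q
    have := hinv (⟨g, hg⟩ : W)⁻¹
    rw [Subtype.ext_iff] at this
    rw [rep_apply, inv_inv] at this
    rw [polyAct_eq]
    exact this
  · rintro ⟨hp, hinvp⟩
    refine ⟨⟨p, hp⟩, fun g => ?_, rfl⟩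
    apply Subtype.ext
    rw [rep_apply]
    rw [invariantsSubmodule] at hinvp
    simp only [Submodule.mem_iInf] at hinvp
    have := hinvp ((g⁻¹ : W) : (Fin n → ℂ) ≃ₗ[ℂ] (Fin n → ℂ)) (g⁻¹ : W).2
    rw [LinearMap.mem_eqLocus] at this
    exact this

lemma free_of_submodule {V : Type*} [AddCommGroup V] [Module ℂ V] (p : Submodule ℂ V) :
    Module.Free ℂ ↥p :=
  inferInstance

lemma finite_of_submodule {V : Type*} [AddCommGroup V] [Module ℂ V] [Module.Finite ℂ V]
    (p : Submodule ℂ V) : Module.Finite ℂ ↥p :=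
  FiniteDimensional.finiteDimensional_submodule p

set_option synthInstance.maxHeartbeats 1000000 in
set_option maxHeartbeats 1000000 in
lemma finrank_eq_trace [Fintype W] (d : ℕ) :
    ((Module.finrank ℂ
        ↥(homogeneousSubmodule (Fin n) ℂ d ⊓ invariantsSubmodule W)) : ℂ)
      = (Fintype.card W : ℂ)⁻¹
          * ∑ g : W, LinearMap.trace ℂ _
              (actEnd (glMatrix ((g : W) : (Fin n → ℂ) ≃ₗ[ℂ] (Fin n → ℂ))) d) := by
  classical
  haveI : Invertible (Fintype.card W : ℂ) :=
    invertibleOfNonzero (Nat.cast_ne_zero.mpr Fintype.card_ne_zero)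
  haveI hfree1 := free_of_submodule (rep W d).invariants
  haveI hfree2 := free_of_submodule (LinearMap.ker (rep W d).averageMap)
  haveI hfin1 := finite_of_submodule (rep W d).invariants
  haveI hfin2 := finite_of_submodule (LinearMap.ker (rep W d).averageMap)
  have htr := ((rep W d).isProj_averageMap).trace
  have h1 : Module.finrank ℂ ↥(homogeneousSubmodule (Fin n) ℂ d ⊓ invariantsSubmodule W)
      = Module.finrank ℂ (rep W d).invariants := by
    rw [← rep_invariants W d, Submodule.finrank_map_subtype_eq]
  rw [h1, ← htr]
  have havg : Representation.asAlgebraHom (rep W d) (GroupAlgebra.average ℂ ↥W)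
      = ⅟(Fintype.card W : ℂ) • ∑ g : W, rep W d g := by
    rw [GroupAlgebra.average]
    have hls := (Representation.asAlgebraHom (rep W d)).toLinearMap.map_smul
      (⅟(Fintype.card W : ℂ)) (∑ g : W, MonoidAlgebra.of ℂ W g)
    simp only [AlgHom.toLinearMap_apply] at hls
    rw [hls, map_sum]
    simp only [Representation.asAlgebraHom_of]
  rw [Representation.averageMap, havg, map_smul, map_sum, invOf_eq_inv, smul_eq_mul]
  refine congrArg ((Fintype.card W : ℂ)⁻¹ * ·) ?_
  exact Fintype.sum_equiv (Equiv.inv W)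
    (fun g => LinearMap.trace ℂ _ (rep W d g))
    (fun g => LinearMap.trace ℂ _
      (actEnd (glMatrix ((g : W) : (Fin n → ℂ) ≃ₗ[ℂ] (Fin n → ℂ))) d))
    (fun g => by rw [Equiv.inv_apply]; rfl)

end MolienAux

/-- **Molien's formula.** For a finite subgroup `W ≤ GL(V)` of a finite-dimensional
complex vector space, the Hilbert series of the ring of invariants `ℂ[V]^W` equals
`(1/|W|) ∑_{g ∈ W} 1 / det_V(1 - g·x)`. -/
theorem molien_formula (W : Subgroup ((Fin n → ℂ) ≃ₗ[ℂ] (Fin n → ℂ))) [Fintype W] :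
    PowerSeries.mk (fun d =>
        (Module.finrank ℂ
          ↥(MvPolynomial.homogeneousSubmodule (Fin n) ℂ d ⊓ invariantsSubmodule W) : ℂ)) =
      (Fintype.card W : ℂ)⁻¹ •
        ∑ g : W, (detOneSub (g : (Fin n → ℂ) ≃ₗ[ℂ] (Fin n → ℂ)))⁻¹ := by
  ext d
  rw [PowerSeries.coeff_mk, map_smul, map_sum]
  have hds : ∀ g : W, (PowerSeries.coeff d)
      ((detOneSub (g : (Fin n → ℂ) ≃ₗ[ℂ] (Fin n → ℂ)))⁻¹)
      = LinearMap.trace ℂ _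
          (MolienAux.actEnd (glMatrix ((g : W) : (Fin n → ℂ) ≃ₗ[ℂ] (Fin n → ℂ))) d) := by
    intro g
    rw [MolienAux.detOneSub_inv _ (Fintype.card W) Fintype.card_pos ?_, PowerSeries.coeff_mk]
    · have : g ^ (Fintype.card W) = 1 := pow_card_eq_one
      calc ((g : W) : (Fin n → ℂ) ≃ₗ[ℂ] (Fin n → ℂ)) ^ Fintype.card W
          = (((g ^ Fintype.card W : W)) : (Fin n → ℂ) ≃ₗ[ℂ] (Fin n → ℂ)) := by
            norm_cast
        _ = 1 := by rw [this]; rfl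
  simp only [hds]
  rw [MolienAux.finrank_eq_trace, smul_eq_mul]
end

section
/- Let G be a group with a BN-pair (Tits system) with Weyl group W = N/(B∩N). Then G admits the Bruhat decomposition: G is the disjoint union over w ∈ W of the double cosets B n_w B, where n_w ∈ N is any representative of w. -/
variable {G : Type*} [Group G]

def doubleCoset (B : Subgroup G) (x : G) : Set G :=
  {g | ∃ b₁ ∈ B, ∃ b₂ ∈ B, g = b₁ * x * b₂}

structure IsBNPair (B N : Subgroup G) (S : Set (N ⧸ (B ⊓ N).subgroupOf N)) : Prop where
  normal : ((B ⊓ N).subgroupOf N).Normal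
  sup_eq_top : B ⊔ N = ⊤
  closure_eq_top : Subgroup.closure S = ⊤
  order_two : ∀ s ∈ S, orderOf s = 2
  bn3 : ∀ s ∈ S, ∀ ns : N, (QuotientGroup.mk ns : N ⧸ (B ⊓ N).subgroupOf N) = s →
    (fun b => (ns : G) * b * (ns : G)) '' (B : Set G) ≠ (B : Set G)
  bn4 : ∀ s ∈ S, ∀ ns : N, (QuotientGroup.mk ns : N ⧸ (B ⊓ N).subgroupOf N) = s →
    ∀ n : N, {g | ∃ b ∈ B, g = (ns : G) * b * (n : G)} ⊆
      doubleCoset B ((ns : G) * (n : G)) ∪ doubleCoset B (n : G)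

namespace BruhatAux

variable {B : Subgroup G}

lemma mem_dc_self (B : Subgroup G) (x : G) : x ∈ doubleCoset B x :=
  ⟨1, one_mem _, 1, one_mem _, by group⟩

lemma mul_left_dc {b x g : G} (hb : b ∈ B) (hg : g ∈ doubleCoset B x) :
    b * g ∈ doubleCoset B x := by
  obtain ⟨b₁, h₁, b₂, h₂, rfl⟩ := hg
  exact ⟨b * b₁, mul_mem hb h₁, b₂, h₂, by group⟩

lemma mul_right_dc {b x g : G} (hb : b ∈ B) (hg : g ∈ doubleCoset B x) :
    g * b ∈ doubleCoset B x := by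
  obtain ⟨b₁, h₁, b₂, h₂, rfl⟩ := hg
  exact ⟨b₁, h₁, b₂ * b, mul_mem h₂ hb, by group⟩

lemma inv_mem_dc {x g : G} (hg : g ∈ doubleCoset B x) :
    g⁻¹ ∈ doubleCoset B x⁻¹ := by
  obtain ⟨b₁, h₁, b₂, h₂, rfl⟩ := hg
  exact ⟨b₂⁻¹, inv_mem h₂, b₁⁻¹, inv_mem h₁, by group⟩

lemma dc_eq_of_mem {x g : G} (hg : g ∈ doubleCoset B x) :
    doubleCoset B g = doubleCoset B x := by
  obtain ⟨b₁, h₁, b₂, h₂, rfl⟩ := hg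
  ext y
  constructor
  · rintro ⟨c₁, hc₁, c₂, hc₂, rfl⟩
    exact ⟨c₁ * b₁, mul_mem hc₁ h₁, b₂ * c₂, mul_mem h₂ hc₂, by group⟩
  · rintro ⟨c₁, hc₁, c₂, hc₂, rfl⟩
    exact ⟨c₁ * b₁⁻¹, mul_mem hc₁ (inv_mem h₁), b₂⁻¹ * c₂, mul_mem (inv_mem h₂) hc₂, by group⟩

lemma dc_eq_of_inter {x y : G}
    (hne : (doubleCoset B x ∩ doubleCoset B y).Nonempty) :
    doubleCoset B x = doubleCoset B y := by
  obtain ⟨g, hgx, hgy⟩ := hne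
  rw [← dc_eq_of_mem hgx, dc_eq_of_mem hgy]

section BN

variable {N : Subgroup G} [((B ⊓ N).subgroupOf N).Normal]
  {S : Set (N ⧸ (B ⊓ N).subgroupOf N)}

lemma self_inv (h : IsBNPair B N S) {s : N ⧸ (B ⊓ N).subgroupOf N} (hs : s ∈ S) : s⁻¹ = s := by
  have h2 : s * s = 1 := by
    have := pow_orderOf_eq_one s
    rwa [h.order_two s hs, pow_two] at this
  rw [inv_eq_iff_mul_eq_one, h2]

lemma mul_self_of_mem (h : IsBNPair B N S) {s : N ⧸ (B ⊓ N).subgroupOf N}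
    (hs : s ∈ S) : s * s = 1 := by
  have h2 := pow_orderOf_eq_one s
  rwa [h.order_two s hs, pow_two] at h2

lemma coe_mem_B_of_mk_eq_one {n : N} (hn : (QuotientGroup.mk n : N ⧸ (B ⊓ N).subgroupOf N) = 1) :
    (n : G) ∈ B := by
  rw [QuotientGroup.eq_one_iff] at hn
  rw [Subgroup.mem_subgroupOf, Subgroup.mem_inf] at hn
  exact hn.1

lemma mk_eq_one_of_coe_mem_B {n : N} (hn : (n : G) ∈ B) :
    (QuotientGroup.mk n : N ⧸ (B ⊓ N).subgroupOf N) = 1 := by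
  rw [QuotientGroup.eq_one_iff, Subgroup.mem_subgroupOf, Subgroup.mem_inf]
  exact ⟨hn, n.2⟩

/-- Well-definedness. -/
lemma dc_eq_of_mk_eq (n n' : N)
    (hnn : (QuotientGroup.mk n : N ⧸ (B ⊓ N).subgroupOf N) = QuotientGroup.mk n') :
    doubleCoset B (n : G) = doubleCoset B (n' : G) := by
  have ht : ((n⁻¹ * n' : N) : G) ∈ B :=
    coe_mem_B_of_mk_eq_one (by rw [QuotientGroup.mk_mul, QuotientGroup.mk_inv, ← hnn, inv_mul_cancel])
  have : (n' : G) ∈ doubleCoset B (n : G) := by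
    have : (n : G) * ((n⁻¹ * n' : N) : G) ∈ doubleCoset B (n : G) :=
      mul_right_dc ht (mem_dc_self B _)
    simpa using this
  exact (dc_eq_of_mem this).symm

/-- Left multiplication stability of the union of double cosets. -/
lemma left_mul (h : IsBNPair B N S) (m : N) {g : G}
    (hg : ∃ n : N, g ∈ doubleCoset B (n : G)) :
    ∃ n : N, (m : G) * g ∈ doubleCoset B (n : G) := by
  set P : (N ⧸ (B ⊓ N).subgroupOf N) → Prop := fun w => ∀ m : N, (QuotientGroup.mk m : N ⧸ (B ⊓ N).subgroupOf N) = w → ∀ g : G,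
    (∃ n : N, g ∈ doubleCoset B (n : G)) → ∃ n : N, (m : G) * g ∈ doubleCoset B (n : G)
    with hP
  have hP1 : P 1 := by
    rintro m hm g ⟨n, hn⟩
    exact ⟨n, mul_left_dc (coe_mem_B_of_mk_eq_one hm) hn⟩
  have hPmul : ∀ x y : N ⧸ (B ⊓ N).subgroupOf N, P x → P y → P (x * y) := by
    intro x y hx hy m hm g hg
    obtain ⟨mx, hmx⟩ := QuotientGroup.mk_surjective x
    obtain ⟨my, hmy⟩ := QuotientGroup.mk_surjective y
    have ht : (((mx * my)⁻¹ * m : N) : G) ∈ B := by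
      apply coe_mem_B_of_mk_eq_one
      rw [QuotientGroup.mk_mul, QuotientGroup.mk_inv, QuotientGroup.mk_mul, hmx, hmy, hm,
        inv_mul_cancel]
    obtain ⟨n, hn⟩ := hg
    have h1 : ∃ n : N, (((mx * my)⁻¹ * m : N) : G) * g ∈ doubleCoset B (n : G) :=
      ⟨n, mul_left_dc ht hn⟩
    obtain ⟨n₂, hn₂⟩ := hy my hmy _ h1
    obtain ⟨n₃, hn₃⟩ := hx mx hmx _ ⟨n₂, hn₂⟩
    refine ⟨n₃, ?_⟩
    have : (mx : G) * ((my : G) * ((((mx * my)⁻¹ * m : N) : G) * g)) = (m : G) * g := by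
      push_cast
      group
    rwa [this] at hn₃
  have hPS : ∀ s ∈ S, P s := by
    rintro s hs m hm g ⟨n, b₁, hb₁, b₂, hb₂, rfl⟩
    have key := h.bn4 s hs m hm n ⟨b₁, hb₁, rfl⟩
    rcases key with hk | hk
    · refine ⟨m * n, ?_⟩
      have : ((m * n : N) : G) = (m : G) * (n : G) := rfl
      rw [this]
      have := mul_right_dc hb₂ hk
      convert this using 1
      group
    · refine ⟨n, ?_⟩
      have := mul_right_dc hb₂ hk
      convert this using 1
      group
  -- closure induction for P w ∧ P w⁻¹
  have key : ∀ w : N ⧸ (B ⊓ N).subgroupOf N, P w ∧ P w⁻¹ := by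
    intro w
    have hw : w ∈ Subgroup.closure S := by rw [h.closure_eq_top]; trivial
    induction hw using Subgroup.closure_induction with
    | mem s hs => exact ⟨hPS s hs, by rw [self_inv h hs]; exact hPS s hs⟩
    | one => exact ⟨hP1, by rw [inv_one]; exact hP1⟩
    | mul x y hx hy ihx ihy =>
      exact ⟨hPmul x y ihx.1 ihy.1, by rw [mul_inv_rev]; exact hPmul _ _ ihy.2 ihx.2⟩
    | inv x hx ihx => exact ⟨ihx.2, by rw [inv_inv]; exact ihx.1⟩
  exact (key (QuotientGroup.mk m)).1 m rfl g hg

/-- Existence part. -/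
lemma exists_dc (h : IsBNPair B N S) (g : G) :
    ∃ n : N, g ∈ doubleCoset B (n : G) := by
  have hg : g ∈ Subgroup.closure ((B : Set G) ∪ (N : Set G)) := by
    rw [Subgroup.closure_union, Subgroup.closure_eq, Subgroup.closure_eq, h.sup_eq_top]
    trivial
  induction hg using Subgroup.closure_induction with
  | mem x hx =>
    rcases hx with hx | hx
    · exact ⟨1, x, hx, 1, one_mem _, by push_cast; group⟩
    · exact ⟨⟨x, hx⟩, mem_dc_self B _⟩
  | one => exact ⟨1, mem_dc_self B _⟩
  | mul x y hx hy ihx ihy =>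
    obtain ⟨n, b₁, hb₁, b₂, hb₂, rfl⟩ := ihx
    obtain ⟨n', c₁, hc₁, c₂, hc₂, rfl⟩ := ihy
    have hz : (b₂ * c₁) * ((n' : G) * c₂) ∈ doubleCoset B (n' : G) :=
      mul_left_dc (mul_mem hb₂ hc₁) (mul_right_dc hc₂ (mem_dc_self B _))
    obtain ⟨m, hm⟩ := left_mul h n ⟨n', hz⟩
    refine ⟨m, ?_⟩
    have := mul_left_dc hb₁ hm
    convert this using 1
    group
  | inv x hx ihx =>
    obtain ⟨n, hn⟩ := ihx
    refine ⟨n⁻¹, ?_⟩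
    have := inv_mem_dc hn
    rwa [show ((n⁻¹ : N) : G) = (n : G)⁻¹ from rfl]

/-- Every element of the Weyl group is a product of a list of generators. -/
lemma exists_word (h : IsBNPair B N S) (w : N ⧸ (B ⊓ N).subgroupOf N) :
    ∃ l : List (N ⧸ (B ⊓ N).subgroupOf N), (∀ x ∈ l, x ∈ S) ∧ l.prod = w := by
  have hw : w ∈ Subgroup.closure S := by rw [h.closure_eq_top]; trivial
  induction hw using Subgroup.closure_induction with
  | mem s hs => exact ⟨[s], by simpa using hs, by simp⟩
  | one => exact ⟨[], by simp, by simp⟩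
  | mul x y hx hy ihx ihy =>
    obtain ⟨l₁, hl₁, hp₁⟩ := ihx
    obtain ⟨l₂, hl₂, hp₂⟩ := ihy
    refine ⟨l₁ ++ l₂, ?_, by rw [List.prod_append, hp₁, hp₂]⟩
    intro a ha
    rcases List.mem_append.mp ha with h' | h'
    exacts [hl₁ a h', hl₂ a h']
  | inv x hx ihx =>
    obtain ⟨l, hl, hp⟩ := ihx
    refine ⟨l.reverse, fun a ha => hl a (List.mem_reverse.mp ha), ?_⟩
    have hmap : (l.map fun a => a⁻¹) = l :=
      (List.map_congr_left fun a ha => self_inv h (hl a ha)).trans (List.map_id l)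
    rw [← hp, List.prod_inv_reverse, hmap]

/-- Minimal length of a word over `S` representing `w`. -/
noncomputable def wordLength {H : Type*} [Monoid H] (S : Set H) (w : H) : ℕ :=
  sInf {k | ∃ l : List H, (∀ x ∈ l, x ∈ S) ∧ l.prod = w ∧ l.length = k}

lemma lenSet_nonempty (h : IsBNPair B N S) (w : N ⧸ (B ⊓ N).subgroupOf N) :
    {k | ∃ l : List (N ⧸ (B ⊓ N).subgroupOf N),
      (∀ x ∈ l, x ∈ S) ∧ l.prod = w ∧ l.length = k}.Nonempty := by
  obtain ⟨l, hl, hp⟩ := exists_word h w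
  exact ⟨l.length, l, hl, hp, rfl⟩

lemma wordLength_le {H : Type*} [Monoid H] {S : Set H} {w : H} {l : List H}
    (hl : ∀ x ∈ l, x ∈ S) (hp : l.prod = w) : wordLength S w ≤ l.length :=
  Nat.sInf_le ⟨l, hl, hp, rfl⟩

lemma eq_one_of_wordLength_zero (h : IsBNPair B N S)
    {w : N ⧸ (B ⊓ N).subgroupOf N} (hw : wordLength S w = 0) : w = 1 := by
  obtain ⟨l, hl, hp, hlen⟩ := Nat.sInf_mem (lenSet_nonempty h w)
  rw [show sInf _ = wordLength S w from rfl, hw, List.length_eq_zero_iff] at hlen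
  rw [← hp, hlen, List.prod_nil]

lemma wordLength_le_smul (h : IsBNPair B N S) {s : N ⧸ (B ⊓ N).subgroupOf N}
    (hs : s ∈ S) (w : N ⧸ (B ⊓ N).subgroupOf N) :
    wordLength S w ≤ wordLength S (s * w) + 1 := by
  obtain ⟨l, hl, hp, hlen⟩ := Nat.sInf_mem (lenSet_nonempty h (s * w))
  have hword : ((s :: l).prod : N ⧸ (B ⊓ N).subgroupOf N) = w := by
    rw [List.prod_cons, hp, ← mul_assoc, mul_self_of_mem h hs, one_mul]
  have := wordLength_le (S := S) (l := s :: l)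
    (by intro x hx; rcases List.mem_cons.mp hx with rfl | hx
        exacts [hs, hl x hx]) hword
  simpa [hlen, wordLength] using this

lemma disjoint_aux (h : IsBNPair B N S) :
    ∀ k (n n' : N), wordLength S (QuotientGroup.mk n) ≤ k →
      wordLength S (QuotientGroup.mk n) ≤ wordLength S (QuotientGroup.mk n') →
      (doubleCoset B (n : G) ∩ doubleCoset B (n' : G)).Nonempty →
      (QuotientGroup.mk n : N ⧸ (B ⊓ N).subgroupOf N) = QuotientGroup.mk n' := by
  have base : ∀ n n' : N, (QuotientGroup.mk n : N ⧸ (B ⊓ N).subgroupOf N) = 1 →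
      (doubleCoset B (n : G) ∩ doubleCoset B (n' : G)).Nonempty →
      (QuotientGroup.mk n : N ⧸ (B ⊓ N).subgroupOf N) = QuotientGroup.mk n' := by
    intro n n' hn1 hne
    obtain ⟨g, ⟨b₁, hb₁, b₂, hb₂, rfl⟩, ⟨c₁, hc₁, c₂, hc₂, heq⟩⟩ := hne
    have hnB : (n : G) ∈ B := coe_mem_B_of_mk_eq_one hn1
    have hn'B : (n' : G) ∈ B := by
      have : (n' : G) = c₁⁻¹ * (b₁ * ↑n * b₂) * c₂⁻¹ := by
        rw [heq]; group
      rw [this]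
      exact mul_mem (mul_mem (inv_mem hc₁) (mul_mem (mul_mem hb₁ hnB) hb₂)) (inv_mem hc₂)
    rw [hn1, mk_eq_one_of_coe_mem_B hn'B]
  intro k
  induction k with
  | zero =>
    intro n n' hk _ hne
    exact base n n' (eq_one_of_wordLength_zero h (Nat.le_zero.mp hk)) hne
  | succ k ih =>
    intro n n' hk hle hne
    rcases Nat.eq_zero_or_pos (wordLength S (QuotientGroup.mk n)) with h0 | hpos
    · exact base n n' (eq_one_of_wordLength_zero h h0) hne
    · obtain ⟨l, hl, hp, hlen⟩ :=
        Nat.sInf_mem (lenSet_nonempty h (QuotientGroup.mk n))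
      have hlen' : l.length = wordLength S (QuotientGroup.mk n) := hlen
      match l, hl, hp, hlen' with
      | [], _, hp, hlen' =>
        simp only [List.length_nil] at hlen'
        omega
      | s :: rest, hl, hp, hlen' =>
        have hs : s ∈ S := hl s List.mem_cons_self
        have hrest : ∀ x ∈ rest, x ∈ S := fun x hx => hl x (List.mem_cons_of_mem _ hx)
        set v : N ⧸ (B ⊓ N).subgroupOf N := rest.prod with hv
        have hsv : s * v = QuotientGroup.mk n := by
          rw [hv, ← List.prod_cons, hp]
        have hlv : wordLength S v ≤ rest.length := wordLength_le hrest rfl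
        have hlvlt : wordLength S v < wordLength S (QuotientGroup.mk n) := by
          simp only [List.length_cons] at hlen'; omega
        obtain ⟨ns, hns⟩ := QuotientGroup.mk_surjective s
        obtain ⟨nv, hnv⟩ := QuotientGroup.mk_surjective v
        -- ns * nv represents mk n
        have hmk : (QuotientGroup.mk (ns * nv) : N ⧸ (B ⊓ N).subgroupOf N)
            = QuotientGroup.mk n := by
          rw [QuotientGroup.mk_mul, hns, hnv, hsv]
        have hCeq : doubleCoset B ((ns * nv : N) : G) = doubleCoset B (n' : G) := by
          rw [dc_eq_of_mk_eq _ _ hmk, dc_eq_of_inter hne]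
        have hmem : ((ns * nv : N) : G) ∈ doubleCoset B (n' : G) := by
          rw [← hCeq]; exact mem_dc_self B _
        obtain ⟨b₁, hb₁, b₂, hb₂, heq⟩ := hmem
        -- mk ns⁻¹ = s
        have hnsinv : (QuotientGroup.mk ns⁻¹ : N ⧸ (B ⊓ N).subgroupOf N) = s := by
          rw [QuotientGroup.mk_inv, hns, self_inv h hs]
        have hx : (ns : G)⁻¹ * b₁ * (n' : G) ∈
            doubleCoset B (((ns⁻¹ : N) : G) * (n' : G)) ∪ doubleCoset B (n' : G) :=
          h.bn4 s hs ns⁻¹ hnsinv n' ⟨b₁, hb₁, rfl⟩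
        have hnveq : (nv : G) = ((ns : G)⁻¹ * b₁ * (n' : G)) * b₂ := by
          have : ((ns * nv : N) : G) = (ns : G) * (nv : G) := rfl
          rw [this] at heq
          rw [← inv_mul_cancel_left (ns : G) (nv : G), heq]
          group
        have hnvmem : (nv : G) ∈
            doubleCoset B (((ns⁻¹ * n' : N) : G)) ∪ doubleCoset B (n' : G) := by
          rw [hnveq]
          rcases hx with hx | hx
          · exact Or.inl (mul_right_dc hb₂ hx)
          · exact Or.inr (mul_right_dc hb₂ hx)
        have hlen_le_k : wordLength S (QuotientGroup.mk nv) ≤ k := by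
          rw [hnv]; omega
        rcases hnvmem with hm | hm
        · -- case v = s * mk n'
          have hmk2 : (QuotientGroup.mk (ns⁻¹ * n') : N ⧸ (B ⊓ N).subgroupOf N)
              = s * QuotientGroup.mk n' := by
            rw [QuotientGroup.mk_mul, hnsinv]
          have hle2 : wordLength S (QuotientGroup.mk nv)
              ≤ wordLength S (QuotientGroup.mk (ns⁻¹ * n')) := by
            have hA : wordLength S v < wordLength S (QuotientGroup.mk n) := hlvlt
            have hB : wordLength S (QuotientGroup.mk n)
                ≤ wordLength S (QuotientGroup.mk n') := hle
            have hC := wordLength_le_smul h hs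
              (QuotientGroup.mk n' : N ⧸ (B ⊓ N).subgroupOf N)
            rw [hnv, hmk2]
            omega
          have := ih nv (ns⁻¹ * n') hlen_le_k hle2
            ⟨(nv : G), mem_dc_self B _, hm⟩
          rw [hnv, hmk2] at this
          rw [← hsv, this, ← mul_assoc, mul_self_of_mem h hs, one_mul]
        · -- case v = mk n' : contradiction
          have := ih nv n' hlen_le_k (by rw [hnv]; omega)
            ⟨(nv : G), mem_dc_self B _, hm⟩
          rw [hnv] at this
          rw [← this] at hle
          omega

end BN

end BruhatAux

/-- **Bruhat decomposition.** If `G` has a BN-pair with Weyl group `W = N/(B ∩ N)`,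
then `G` is the disjoint union, over `w ∈ W`, of the double cosets `B n_w B`,
and the double coset `B n_w B` does not depend on the representative `n_w` of `w`. -/
theorem bruhat_decomposition (B N : Subgroup G)
    (S : Set (N ⧸ (B ⊓ N).subgroupOf N)) (h : IsBNPair B N S) :
    (∀ g : G, ∃ n : N, g ∈ doubleCoset B (n : G)) ∧
    (∀ n n' : N,
      (QuotientGroup.mk n : N ⧸ (B ⊓ N).subgroupOf N) = QuotientGroup.mk n' →
      doubleCoset B (n : G) = doubleCoset B (n' : G)) ∧
    (∀ n n' : N, (doubleCoset B (n : G) ∩ doubleCoset B (n' : G)).Nonempty →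
      (QuotientGroup.mk n : N ⧸ (B ⊓ N).subgroupOf N) = QuotientGroup.mk n') := by
  haveI := h.normal
  refine ⟨BruhatAux.exists_dc h, BruhatAux.dc_eq_of_mk_eq, ?_⟩
  intro n n' hne
  rcases le_total (BruhatAux.wordLength S (QuotientGroup.mk n))
    (BruhatAux.wordLength S (QuotientGroup.mk n')) with hle | hle
  · exact BruhatAux.disjoint_aux h _ n n' le_rfl hle hne
  · exact (BruhatAux.disjoint_aux h _ n' n le_rfl hle
      ⟨hne.choose, hne.choose_spec.2, hne.choose_spec.1⟩).symm
end
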